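/- arXiv:1402.1211 — 4 statements merged into one kernel-verified Lean document; each statement's English description precedes it below -/
import Mathlib

section
/- Let Ψ : [t0,tf] → ℝ be measurable, bounded, with essential infimum v, and let h* ∈ L²₊[t0,tf] satisfy ∫ h* = Q > 0. Suppose ∫ Ψ(t)(h(t) − h*(t)) dt ≥ 0 for all nonnegative h ∈ L²[t0,tf] with ∫ h = Q. Then for almost every t ∈ [t0,tf], h*(t) > 0 implies Ψ(t) = v. -/
open MeasureTheory Set

/-- The essential infimum of `g` on `[t0, tf]`, defined as
`sup { x : ℝ | ν { s ∈ [t0,tf] | g s < x } = 0 }` where `ν` is Lebesgue measure. -/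
noncomputable def essinfOn (t0 tf : ℝ) (g : ℝ → ℝ) : ℝ :=
  sSup {x : ℝ | volume {s ∈ Icc t0 tf | g s < x} = 0}

/-- Sufficiency direction of the DUE ↔ VI equivalence, single path, single OD pair:
if `h*` solves the variational inequality, then a.e. `h*(t) > 0` implies `Ψ(t) = v`. -/
theorem vi_implies_due (t0 tf : ℝ) (ht : t0 < tf) (Q : ℝ) (hQ : 0 < Q)
    (Ψ hstar : ℝ → ℝ) (hΨmeas : Measurable Ψ)
    (hΨbdd : ∃ C : ℝ, ∀ t ∈ Icc t0 tf, |Ψ t| ≤ C)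
    (v : ℝ) (hv : v = essinfOn t0 tf Ψ)
    (hstar_mem : MemLp hstar 2 (volume.restrict (Icc t0 tf)))
    (hstar_nonneg : ∀ᵐ t ∂(volume.restrict (Icc t0 tf)), 0 ≤ hstar t)
    (hstar_cons : ∫ t in Icc t0 tf, hstar t = Q)
    (hVI : ∀ h : ℝ → ℝ, MemLp h 2 (volume.restrict (Icc t0 tf)) →
      (∀ᵐ t ∂(volume.restrict (Icc t0 tf)), 0 ≤ h t) →
      (∫ t in Icc t0 tf, h t = Q) →
      0 ≤ ∫ t in Icc t0 tf, Ψ t * (h t - hstar t)) :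
    ∀ᵐ t ∂(volume.restrict (Icc t0 tf)), 0 < hstar t → Ψ t = v := by
  obtain ⟨C, hC⟩ := hΨbdd
  set μ := volume.restrict (Icc t0 tf) with hμ
  have hIccMeas : MeasurableSet (Icc t0 tf) := measurableSet_Icc
  have hIccVol : volume (Icc t0 tf) < ⊤ := by
    rw [Real.volume_Icc]; exact ENNReal.ofReal_lt_top
  haveI hfin : IsFiniteMeasure μ := by
    constructor
    rw [hμ, Measure.restrict_apply MeasurableSet.univ, Set.univ_inter]
    exact hIccVol
  have hIccpos : volume (Icc t0 tf) ≠ 0 := by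
    rw [Real.volume_Icc]
    simpa using sub_pos.mpr ht
  set S : Set ℝ := {x : ℝ | volume {s ∈ Icc t0 tf | Ψ s < x} = 0} with hS
  -- S is bounded above by C+1
  have hbdd : BddAbove S := by
    refine ⟨C + 1, fun x hx => ?_⟩
    by_contra hxC
    push_neg at hxC
    have : Icc t0 tf ⊆ {s ∈ Icc t0 tf | Ψ s < x} := by
      intro s hs
      refine ⟨hs, ?_⟩
      have := hC s hs
      have : Ψ s ≤ C := (abs_le.mp this).2
      linarith
    exact hIccpos (measure_mono_null (fun s hs => this hs) hx |>.symm ▸ rfl) |>.elim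
  have hne : S.Nonempty := by
    refine ⟨-C - 1, ?_⟩
    have : {s ∈ Icc t0 tf | Ψ s < -C - 1} = ∅ := by
      ext s
      simp only [mem_setOf_eq, mem_empty_iff_false, iff_false, not_and]
      intro hs
      have := (abs_le.mp (hC s hs)).1
      linarith
    show volume {s ∈ Icc t0 tf | Ψ s < -C - 1} = 0
    rw [this]; exact measure_empty
  -- a.e. Ψ ≥ v on Icc
  have hΨge : ∀ᵐ t ∂μ, v ≤ Ψ t := by
    have hnull : volume {s ∈ Icc t0 tf | Ψ s < v} = 0 := by
      have hcover : {s ∈ Icc t0 tf | Ψ s < v} ⊆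
          ⋃ n : ℕ, {s ∈ Icc t0 tf | Ψ s < v - 1 / (n + 1)} := by
        intro s hs
        obtain ⟨hs1, hs2⟩ := hs
        obtain ⟨n, hn⟩ := exists_nat_one_div_lt (sub_pos.mpr hs2)
        exact mem_iUnion.mpr ⟨n, hs1, by linarith⟩
      refine measure_mono_null hcover (measure_iUnion_null fun n => ?_)
      have hlt : v - 1 / (n + 1) < v := by
        have : (0:ℝ) < 1 / (n + 1) := by positivity
        linarith
      have hvS : v = sSup S := by rw [hv]; rfl
      have hlt' : v - 1 / (n + 1) < sSup S := lt_of_lt_of_le hlt hvS.le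
      obtain ⟨y, hyS, hxy⟩ := exists_lt_of_lt_csSup hne hlt'
      refine measure_mono_null (fun s hs => ?_) hyS
      exact ⟨hs.1, hs.2.trans hxy⟩
    rw [hμ, ae_restrict_iff' hIccMeas, ae_iff]
    refine measure_mono_null (fun s hs => ?_) hnull
    simp only [mem_setOf_eq] at hs
    push_neg at hs
    exact ⟨hs.1, hs.2⟩
  -- positivity of the sets {Ψ < v + ε}
  have hpos : ∀ ε : ℝ, 0 < ε → volume {s ∈ Icc t0 tf | Ψ s < v + ε} ≠ 0 := by
    intro ε hε hnull
    have hmem : v + ε ∈ S := hnull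
    have hvS : v = sSup S := by rw [hv]; rfl
    have : v + ε ≤ sSup S := le_csSup hbdd hmem
    linarith
  -- integrability facts
  have hstar_int : Integrable hstar μ := hstar_mem.integrable one_le_two
  have hΨae : ∀ᵐ t ∂μ, ‖Ψ t‖ ≤ C := by
    rw [hμ, ae_restrict_iff' hIccMeas]
    exact Filter.Eventually.of_forall fun t htI => hC t htI
  have hΨsm : AEStronglyMeasurable Ψ μ := hΨmeas.aestronglyMeasurable
  have hΨhstar_int : Integrable (fun t => Ψ t * hstar t) μ :=
    hstar_int.bdd_mul hΨsm hΨae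
  -- lower bound : v * Q ≤ ∫ Ψ hstar
  have hlow : v * Q ≤ ∫ t, Ψ t * hstar t ∂μ := by
    have h1 : ∫ t, v * hstar t ∂μ = v * Q := by
      rw [integral_const_mul, hμ]
      exact congrArg (v * ·) hstar_cons
    rw [← h1]
    refine integral_mono_ae (hstar_int.const_mul v) hΨhstar_int ?_
    filter_upwards [hΨge, hstar_nonneg] with t h1 h2
    exact mul_le_mul_of_nonneg_right h1 h2
  -- upper bound : ∫ Ψ hstar ≤ v * Q
  have hup : ∫ t, Ψ t * hstar t ∂μ ≤ v * Q := by
    refine le_of_forall_pos_le_add fun ε' hε' => ?_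
    set ε := ε' / Q with hεdef
    have hε : 0 < ε := div_pos hε' hQ
    set A : Set ℝ := {s ∈ Icc t0 tf | Ψ s < v + ε} with hA
    have hAmeas : MeasurableSet A :=
      hIccMeas.inter (hΨmeas measurableSet_Iio)
    have hAsub : A ⊆ Icc t0 tf := fun s hs => hs.1
    have hAvol_ne : volume A ≠ 0 := hpos ε hε
    have hAvol_lt : volume A < ⊤ := lt_of_le_of_lt (measure_mono hAsub) hIccVol
    set a := (volume A).toReal with ha
    have ha_pos : 0 < a := ENNReal.toReal_pos hAvol_ne hAvol_lt.ne
    set c := Q / a with hc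
    have hc_pos : 0 < c := div_pos hQ ha_pos
    set h : ℝ → ℝ := A.indicator (fun _ => c) with hh
    have hμA : μ A = volume A := by
      rw [hμ, Measure.restrict_apply hAmeas, inter_eq_left.mpr hAsub]
    have hrestr : μ.restrict A = volume.restrict A := by
      rw [hμ, Measure.restrict_restrict hAmeas, inter_eq_left.mpr hAsub]
    -- h is a valid test function
    have hh_sm : AEStronglyMeasurable h μ :=
      ((measurable_const.indicator hAmeas).aestronglyMeasurable)
    have hh_mem : MemLp h 2 μ := by
      refine MemLp.of_bound hh_sm c ?_
      refine Filter.Eventually.of_forall fun t => ?_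
      rw [hh]
      by_cases htA : t ∈ A
      · simp [indicator_of_mem htA, abs_of_pos hc_pos, Real.norm_eq_abs]
      · simp [indicator_of_notMem htA, le_of_lt hc_pos]
    have hh_nonneg : ∀ᵐ t ∂μ, 0 ≤ h t :=
      Filter.Eventually.of_forall fun t => indicator_nonneg (fun _ _ => hc_pos.le) t
    have hh_cons : ∫ t in Icc t0 tf, h t = Q := by
      rw [hh, ← hμ, integral_indicator_const c hAmeas, measureReal_def, hμA, smul_eq_mul, ← ha, hc]
      field_simp
    have hVIh := hVI h hh_mem hh_nonneg hh_cons
    -- ∫ Ψ h ≤ (v+ε) * Q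
    have hΨh_int : Integrable (fun t => Ψ t * h t) μ :=
      (hh_mem.integrable one_le_two).bdd_mul hΨsm hΨae
    have hΨh_eq : ∫ t, Ψ t * h t ∂μ = ∫ t in A, Ψ t * c := by
      have : (fun t => Ψ t * h t) = A.indicator (fun t => Ψ t * c) := by
        funext t
        rw [hh]
        by_cases htA : t ∈ A
        · simp [indicator_of_mem htA]
        · simp [indicator_of_notMem htA]
      rw [this, integral_indicator hAmeas, hrestr]
    have hΨh_le : ∫ t, Ψ t * h t ∂μ ≤ (v + ε) * Q := by
      rw [hΨh_eq]
      haveI : IsFiniteMeasure (volume.restrict A) := by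
        constructor
        rw [Measure.restrict_apply MeasurableSet.univ, Set.univ_inter]
        exact hAvol_lt
      have hint1 : Integrable (fun t => Ψ t * c) (volume.restrict A) := by
        refine Integrable.mul_const ?_ c
        refine MemLp.integrable le_rfl (MemLp.of_bound hΨmeas.aestronglyMeasurable C ?_)
        rw [ae_restrict_iff' hAmeas]
        exact Filter.Eventually.of_forall fun t htA => hC t (hAsub htA)
      have hle : ∫ t in A, Ψ t * c ≤ ∫ t in A, (v + ε) * c := by
        refine integral_mono_ae hint1 (integrable_const _) ?_
        have : ∀ᵐ t ∂(volume.restrict A), Ψ t * c ≤ (v + ε) * c := by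
          rw [ae_restrict_iff' hAmeas]
          exact Filter.Eventually.of_forall fun t htA =>
            mul_le_mul_of_nonneg_right htA.2.le hc_pos.le
        exact this
      have heq : ∫ t in A, (v + ε) * c = (v + ε) * Q := by
        rw [integral_const, smul_eq_mul, measureReal_restrict_apply_univ, measureReal_def, ← ha, hc]
        field_simp
      linarith
    -- VI gives ∫ Ψ hstar ≤ ∫ Ψ h
    have hVI' : ∫ t, Ψ t * hstar t ∂μ ≤ ∫ t, Ψ t * h t ∂μ := by
      have hsplit : ∫ t in Icc t0 tf, Ψ t * (h t - hstar t) =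
          ∫ t, Ψ t * h t ∂μ - ∫ t, Ψ t * hstar t ∂μ := by
        rw [← integral_sub hΨh_int hΨhstar_int, ← hμ]
        congr 1
        funext t
        ring
      rw [hsplit] at hVIh
      linarith
    have : (v + ε) * Q = v * Q + ε' := by
      rw [hεdef]; field_simp
    linarith
  -- combine: ∫ (Ψ - v) hstar = 0 with nonneg integrand
  have hint0 : Integrable (fun t => (Ψ t - v) * hstar t) μ := by
    have : (fun t => (Ψ t - v) * hstar t) =
        fun t => Ψ t * hstar t - v * hstar t := by funext t; ring
    rw [this]
    exact hΨhstar_int.sub (hstar_int.const_mul v)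
  have hnonneg0 : 0 ≤ᵐ[μ] fun t => (Ψ t - v) * hstar t := by
    filter_upwards [hΨge, hstar_nonneg] with t h1 h2
    exact mul_nonneg (sub_nonneg.mpr h1) h2
  have hzero : ∫ t, (Ψ t - v) * hstar t ∂μ = 0 := by
    have hsplit : ∫ t, (Ψ t - v) * hstar t ∂μ =
        ∫ t, Ψ t * hstar t ∂μ - v * Q := by
      have : (fun t => (Ψ t - v) * hstar t) =
          fun t => Ψ t * hstar t - v * hstar t := by funext t; ring
      rw [this, integral_sub hΨhstar_int (hstar_int.const_mul v), integral_const_mul, hμ,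
        hstar_cons]
    rw [hsplit]
    linarith
  have hae0 : (fun t => (Ψ t - v) * hstar t) =ᵐ[μ] 0 :=
    (integral_eq_zero_iff_of_nonneg_ae hnonneg0 hint0).mp hzero
  filter_upwards [hae0, hΨge] with t h1 _ hpos'
  have h1' : (Ψ t - v) * hstar t = 0 := h1
  rcases mul_eq_zero.mp h1' with h | h
  · linarith [sub_eq_zero.mp h]
  · linarith
end

section
/- Let Ψ : [t0,tf] → ℝ be measurable and bounded with essential infimum v, ε ≥ 0, and φᵉ(t) = max(Ψ(t), v + ε). If h* ∈ L²₊[t0,tf] with ∫ h* = Q > 0 satisfies ∫ φᵉ(t)(h(t) − h*(t)) dt ≥ 0 for all nonnegative h ∈ L²[t0,tf] with ∫ h = Q, then for a.e. t, h*(t) > 0 implies v ≤ Ψ(t) ≤ v + ε. -/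
open MeasureTheory Set

/-- Sufficiency direction of the BR-DUE VI characterization, one path and one OD pair:
if `h*` solves the variational inequality with operator `φᵉ(t) = max(Ψ(t), v + ε)`,
then a.e. `h*(t) > 0` implies `v ≤ Ψ(t) ≤ v + ε`. -/
theorem vi_implies_brdue (t0 tf : ℝ) (ht : t0 < tf) (Q : ℝ) (hQ : 0 < Q)
    (Ψ hstar : ℝ → ℝ) (hΨmeas : Measurable Ψ)
    (hΨbdd : ∃ C : ℝ, ∀ t ∈ Icc t0 tf, |Ψ t| ≤ C)
    (v : ℝ) (hv : v = essinfOn t0 tf Ψ)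
    (ε : ℝ) (hε : 0 ≤ ε)
    (φ : ℝ → ℝ) (hφ : φ = fun t => max (Ψ t) (v + ε))
    (hstar_mem : MemLp hstar 2 (volume.restrict (Icc t0 tf)))
    (hstar_nonneg : ∀ᵐ t ∂(volume.restrict (Icc t0 tf)), 0 ≤ hstar t)
    (hstar_cons : ∫ t in Icc t0 tf, hstar t = Q)
    (hVI : ∀ h : ℝ → ℝ, MemLp h 2 (volume.restrict (Icc t0 tf)) →
      (∀ᵐ t ∂(volume.restrict (Icc t0 tf)), 0 ≤ h t) →
      (∫ t in Icc t0 tf, h t = Q) →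
      0 ≤ ∫ t in Icc t0 tf, φ t * (h t - hstar t)) :
    ∀ᵐ t ∂(volume.restrict (Icc t0 tf)), 0 < hstar t → v ≤ Ψ t ∧ Ψ t ≤ v + ε := by
  obtain ⟨C, hC⟩ := hΨbdd
  set μ := volume.restrict (Icc t0 tf) with hμ
  have hIccmeas : MeasurableSet (Icc t0 tf) := measurableSet_Icc
  have hIccvol : volume (Icc t0 tf) = ENNReal.ofReal (tf - t0) := Real.volume_Icc
  have hIccfin : volume (Icc t0 tf) < ⊤ := by rw [hIccvol]; exact ENNReal.ofReal_lt_top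
  have hIccpos : 0 < volume (Icc t0 tf) := by
    rw [hIccvol]; exact ENNReal.ofReal_pos.2 (by linarith)
  haveI : IsFiniteMeasure μ := by
    constructor
    rw [hμ, Measure.restrict_apply_univ]
    exact hIccfin
  -- the set defining the essential infimum
  set S : Set ℝ := {x : ℝ | volume {s ∈ Icc t0 tf | Ψ s < x} = 0} with hS
  have hSne : S.Nonempty := by
    refine ⟨-C, ?_⟩
    have : {s ∈ Icc t0 tf | Ψ s < -C} = ∅ := by
      ext s
      simp only [mem_setOf_eq, mem_empty_iff_false, iff_false, not_and]
      intro hs hlt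
      have := hC s hs
      have := neg_abs_le (Ψ s)
      linarith
    show volume {s ∈ Icc t0 tf | Ψ s < -C} = 0
    rw [this]; exact measure_empty
  have hSbdd : BddAbove S := by
    refine ⟨C + 1, fun x hx => ?_⟩
    by_contra hgt
    push_neg at hgt
    have hsub : Icc t0 tf ⊆ {s ∈ Icc t0 tf | Ψ s < x} := by
      intro s hs
      refine ⟨hs, ?_⟩
      have := hC s hs
      have := le_abs_self (Ψ s)
      linarith
    have := measure_mono (μ := volume) hsub
    rw [hx] at this
    exact absurd (le_antisymm this zero_le) (ne_of_gt hIccpos)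
  have hvS : v = sSup S := hv
  -- part 1 : a.e. v ≤ Ψ
  have hnull1 : volume {s ∈ Icc t0 tf | Ψ s < v} = 0 := by
    have hsub : {s ∈ Icc t0 tf | Ψ s < v} ⊆
        ⋃ n : ℕ, {s ∈ Icc t0 tf | Ψ s < v - 1 / (n + 1)} := by
      intro s ⟨hs, hlt⟩
      obtain ⟨n, hn⟩ := exists_nat_one_div_lt (sub_pos.2 hlt)
      exact mem_iUnion.2 ⟨n, hs, by linarith⟩
    refine measure_mono_null hsub (measure_iUnion_null fun n => ?_)
    have h1 : v - 1 / (n + 1) < sSup S := by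
      rw [← hvS]
      have : (0:ℝ) < 1 / (n + 1) := by positivity
      linarith
    obtain ⟨x, hxS, hxgt⟩ := exists_lt_of_lt_csSup hSne h1
    refine measure_mono_null (fun s hs => ?_) hxS
    exact ⟨hs.1, by linarith [hs.2]⟩
  have hpart1 : ∀ᵐ t ∂μ, v ≤ Ψ t := by
    rw [hμ, ae_restrict_iff' hIccmeas]
    rw [ae_iff]
    refine measure_mono_null ?_ hnull1
    intro s hs
    simp only [mem_setOf_eq, not_forall] at hs
    obtain ⟨hsI, hlt⟩ := hs
    exact ⟨hsI, by linarith [lt_of_not_ge hlt]⟩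
  -- measurable representative of hstar
  obtain ⟨g, hgmeas, hgae⟩ :
      ∃ g : ℝ → ℝ, Measurable g ∧ hstar =ᵐ[μ] g := by
    have h := hstar_mem.aestronglyMeasurable.aemeasurable
    exact ⟨h.mk hstar, h.measurable_mk, h.ae_eq_mk⟩
  have hgmem : MemLp g 2 μ := hstar_mem.ae_eq hgae
  have hgint : Integrable g μ := hgmem.integrable (by norm_num)
  have hgnonneg : ∀ᵐ t ∂μ, 0 ≤ g t := by
    filter_upwards [hstar_nonneg, hgae] with t h1 h2
    rw [← h2]; exact h1
  have hgcons : ∫ t in Icc t0 tf, g t = Q := by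
    rw [← hstar_cons]
    exact (integral_congr_ae hgae).symm
  -- φ facts
  have hφmeas : Measurable φ := by
    rw [hφ]; exact hΨmeas.max measurable_const
  have hφbd : ∀ t ∈ Icc t0 tf, |φ t| ≤ max C |v + ε| := by
    intro t htI
    rw [hφ]
    exact le_trans abs_max_le_max_abs_abs (max_le_max (hC t htI) (le_refl _))
  have hφbd_ae : ∀ᵐ t ∂μ, ‖φ t‖ ≤ max C |v + ε| := by
    rw [hμ, ae_restrict_iff' hIccmeas]
    exact ae_of_all _ hφbd
  have hφint : Integrable φ μ :=
    (memLp_top_of_bound hφmeas.aestronglyMeasurable _ hφbd_ae).integrable le_top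
  have hφg_int : Integrable (fun t => φ t * g t) μ :=
    hgint.bdd_mul hφmeas.aestronglyMeasurable hφbd_ae
  -- part 2 : a.e. (0 < g t → Ψ t ≤ v + ε)
  have hpart2 : ∀ᵐ t ∂μ, 0 < g t → Ψ t ≤ v + ε := by
    -- the key claim : each T n is null
    have hTn : ∀ n : ℕ, volume
        {s ∈ Icc t0 tf | 1 / (n + 1) < g s ∧ v + ε + 1 / (n + 1) < Ψ s} = 0 := by
      intro n
      set δ : ℝ := 1 / (n + 1) with hδdef
      have hδpos : 0 < δ := by positivity
      set A : Set ℝ := {s ∈ Icc t0 tf | δ < g s ∧ v + ε + δ < Ψ s} with hA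
      have hAmeas : MeasurableSet A := by
        refine hIccmeas.inter ?_
        exact (measurableSet_lt measurable_const hgmeas).inter
          (measurableSet_lt measurable_const hΨmeas)
      have hAsub : A ⊆ Icc t0 tf := fun s hs => hs.1
      by_contra hApos
      have hAfin : volume A < ⊤ := lt_of_le_of_lt (measure_mono hAsub) hIccfin
      have hAvolpos : 0 < (volume A).toReal :=
        ENNReal.toReal_pos hApos (ne_of_lt hAfin)
      -- the cheap set B
      set B : Set ℝ := {s ∈ Icc t0 tf | Ψ s < v + δ / 2} with hB
      have hBmeas : MeasurableSet B :=
        hIccmeas.inter (measurableSet_lt hΨmeas measurable_const)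
      have hBsub : B ⊆ Icc t0 tf := fun s hs => hs.1
      have hBpos : volume B ≠ 0 := by
        intro h0
        have : v + δ / 2 ∈ S := h0
        have := le_csSup hSbdd this
        rw [← hvS] at this
        linarith
      have hBfin : volume B < ⊤ := lt_of_le_of_lt (measure_mono hBsub) hIccfin
      have hBvolpos : 0 < (volume B).toReal := ENNReal.toReal_pos hBpos (ne_of_lt hBfin)
      -- mass on A
      set I : ℝ := ∫ t in A, g t with hI
      have hgintA : IntegrableOn g A volume := by
        have : IntegrableOn g (Icc t0 tf) volume := hgint
        exact this.mono_set hAsub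
      have hIlb : δ * (volume A).toReal ≤ I := by
        have h1 : ∫ _ in A, δ ∂volume ≤ ∫ t in A, g t := by
          refine setIntegral_mono_on (integrableOn_const hAfin.ne) hgintA hAmeas ?_
          intro x hx
          exact le_of_lt hx.2.1
        rw [setIntegral_const] at h1
        simpa [mul_comm, measureReal_def] using h1
      have hIpos : 0 < I := lt_of_lt_of_le (by positivity) hIlb
      set c : ℝ := I / (volume B).toReal with hc
      have hcpos : 0 < c := div_pos hIpos hBvolpos
      have hcvol : c * (volume B).toReal = I := div_mul_cancel₀ _ (ne_of_gt hBvolpos)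
      -- the test function
      set h : ℝ → ℝ := fun t => Aᶜ.indicator g t + B.indicator (fun _ => c) t with hh
      have hhmem : MemLp h 2 μ :=
        (hgmem.indicator hAmeas.compl).add ((memLp_const c).indicator hBmeas)
      have hhnonneg : ∀ᵐ t ∂μ, 0 ≤ h t := by
        filter_upwards [hgnonneg] with t h1
        refine add_nonneg ?_ ?_
        · by_cases hmem : t ∈ Aᶜ
          · rwa [indicator_of_mem hmem]
          · rw [indicator_of_notMem hmem]
        · by_cases hmem : t ∈ B
          · rw [indicator_of_mem hmem]; exact le_of_lt hcpos
          · rw [indicator_of_notMem hmem]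
      -- restricted measures coincide on subsets of Icc
      have hresA : μ.restrict A = volume.restrict A := by
        rw [hμ, Measure.restrict_restrict hAmeas, inter_eq_left.2 hAsub]
      have hresB : μ.restrict B = volume.restrict B := by
        rw [hμ, Measure.restrict_restrict hBmeas, inter_eq_left.2 hBsub]
      have hindA : ∫ t, A.indicator g t ∂μ = I := by
        rw [integral_indicator hAmeas, hresA]
      have hintindA : Integrable (A.indicator g) μ := hgint.indicator hAmeas
      have hh_cons : ∫ t in Icc t0 tf, h t = Q := by
        have hsplit : ∫ t, h t ∂μ =
            (∫ t, Aᶜ.indicator g t ∂μ) + ∫ t, B.indicator (fun _ => c) t ∂μ := by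
          exact integral_add (hgint.indicator hAmeas.compl)
            ((integrable_const c).indicator hBmeas)
        have h2 : ∫ t, Aᶜ.indicator g t ∂μ = Q - I := by
          rw [indicator_compl]
          simp only [Pi.sub_apply]
          rw [integral_sub hgint hintindA, hindA]
          have : ∫ t, g t ∂μ = Q := hgcons
          rw [this]
        have h3 : ∫ t, B.indicator (fun _ => c) t ∂μ = I := by
          rw [integral_indicator hBmeas, hresB, setIntegral_const, smul_eq_mul,
            mul_comm]
          exact hcvol
        calc ∫ t in Icc t0 tf, h t = ∫ t, h t ∂μ := rfl
          _ = (Q - I) + I := by rw [hsplit, h2, h3]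
          _ = Q := by ring
      -- apply the VI
      have hVIh := hVI h hhmem hhnonneg hh_cons
      -- rewrite the VI integrand
      have hcongr : ∫ t, φ t * (h t - hstar t) ∂μ =
          ∫ t, (B.indicator (fun s => φ s * c) t
            - A.indicator (fun s => φ s * g s) t) ∂μ := by
        refine integral_congr_ae ?_
        filter_upwards [hgae] with t h1
        rw [h1, hh]
        by_cases hmemA : t ∈ A
        · have hmemB : t ∉ B := by
            intro hmemB
            have := hmemA.2.2
            have := hmemB.2
            linarith
          simp only [Set.indicator_apply, mem_compl_iff, hmemA, if_true, if_false,
            if_neg hmemB, not_true]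
          ring
        · by_cases hmemB : t ∈ B
          · simp only [Set.indicator_apply, mem_compl_iff, hmemA, if_true, if_false,
              if_pos hmemB, not_false_iff]
            ring
          · simp only [Set.indicator_apply, mem_compl_iff, hmemA, if_true, if_false,
              if_neg hmemB, not_false_iff]
            ring
      have hintφgA : Integrable (A.indicator fun s => φ s * g s) μ :=
        hφg_int.indicator hAmeas
      have hintφcB : Integrable (B.indicator fun s => φ s * c) μ := by
        have : Integrable (fun s => φ s * c) μ := hφint.mul_const c
        exact this.indicator hBmeas
      have hsplit2 : ∫ t, (B.indicator (fun s => φ s * c) t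
            - A.indicator (fun s => φ s * g s) t) ∂μ =
          (∫ t in B, φ t * c) - ∫ t in A, φ t * g t := by
        rw [integral_sub hintφcB hintφgA,
          integral_indicator hAmeas, integral_indicator hBmeas, hresA, hresB]
      -- bounds
      have hφgA_int : IntegrableOn (fun t => φ t * g t) A volume := by
        have : IntegrableOn (fun t => φ t * g t) (Icc t0 tf) volume := hφg_int
        exact this.mono_set hAsub
      have hElb : (v + ε + δ) * I ≤ ∫ t in A, φ t * g t := by
        have h1 : ∫ t in A, (v + ε + δ) * g t ≤ ∫ t in A, φ t * g t := by
          refine setIntegral_mono_on (hgintA.const_mul _) hφgA_int hAmeas ?_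
          intro x hx
          have hg0 : 0 ≤ g x := le_of_lt (lt_trans hδpos hx.2.1)
          have hφx : v + ε + δ ≤ φ x := by
            rw [hφ]
            exact le_trans (le_of_lt hx.2.2) (le_max_left _ _)
          exact mul_le_mul_of_nonneg_right hφx hg0
        rwa [integral_const_mul] at h1
      have hφB_int : IntegrableOn φ B volume := by
        have : IntegrableOn φ (Icc t0 tf) volume := hφint
        exact this.mono_set hBsub
      have hEub : ∫ t in B, φ t ≤ (v + ε + δ / 2) * (volume B).toReal := by
        have h1 : ∫ t in B, φ t ≤ ∫ _ in B, (v + ε + δ / 2) ∂volume := by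
          refine setIntegral_mono_on hφB_int
            (integrableOn_const hBfin.ne) hBmeas ?_
          intro x hx
          rw [hφ]
          refine max_le (by linarith [hx.2]) (by linarith)
        rwa [setIntegral_const, smul_eq_mul, mul_comm] at h1
      have hintBc : ∫ t in B, φ t * c = (∫ t in B, φ t) * c := by
        rw [← integral_mul_const]
      -- putting everything together
      have hVIh' : 0 ≤ (∫ t in B, φ t) * c - ∫ t in A, φ t * g t := by
        rw [hcongr, hsplit2, hintBc] at hVIh
        exact hVIh
      have hclaim : (∫ t in B, φ t) * c ≤ (v + ε + δ / 2) * I := by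
        calc (∫ t in B, φ t) * c ≤ ((v + ε + δ / 2) * (volume B).toReal) * c :=
              mul_le_mul_of_nonneg_right hEub (le_of_lt hcpos)
          _ = (v + ε + δ / 2) * (c * (volume B).toReal) := by ring
          _ = (v + ε + δ / 2) * I := by rw [hcvol]
      have hfin : 0 ≤ - ((v + ε + δ) * I) + (v + ε + δ / 2) * I := by linarith
      nlinarith
    -- assemble
    rw [hμ, ae_restrict_iff' hIccmeas, ae_iff]
    have hsub : {t | ¬ (t ∈ Icc t0 tf → 0 < g t → Ψ t ≤ v + ε)} ⊆
        ⋃ n : ℕ, {s ∈ Icc t0 tf | 1 / (n + 1) < g s ∧ v + ε + 1 / (n + 1) < Ψ s} := by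
      intro s hs
      simp only [mem_setOf_eq, not_forall] at hs
      obtain ⟨hsI, hgpos, hΨgt⟩ := hs
      push_neg at hΨgt
      obtain ⟨n1, hn1⟩ := exists_nat_one_div_lt hgpos
      obtain ⟨n2, hn2⟩ := exists_nat_one_div_lt (sub_pos.2 hΨgt)
      refine mem_iUnion.2 ⟨max n1 n2, hsI, ?_, ?_⟩
      · refine lt_of_le_of_lt ?_ hn1
        refine one_div_le_one_div_of_le (by positivity) ?_
        have : (n1 : ℝ) ≤ ((max n1 n2 : ℕ) : ℝ) := by exact_mod_cast le_max_left n1 n2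
        linarith
      · have h4 : (1:ℝ) / ((max n1 n2 : ℕ) + 1) ≤ 1 / (n2 + 1) := by
          refine one_div_le_one_div_of_le (by positivity) ?_
          have : (n2 : ℝ) ≤ ((max n1 n2 : ℕ) : ℝ) := by exact_mod_cast le_max_right n1 n2
          linarith
        linarith
    exact measure_mono_null hsub (measure_iUnion_null hTn)
  -- conclusion
  filter_upwards [hpart1, hpart2, hgae] with t h1 h2 h3 hpos
  exact ⟨h1, h2 (h3 ▸ hpos)⟩
end

section
/- For two paths with measurable bounded cost functions Ψ₁, Ψ₂ : [t0,tf] → ℝ, tolerances ε₁, ε₂ ≥ 0, and v = min(essinf Ψ₁, essinf Ψ₂), define Φᵢ(t) = max(Ψᵢ(t), v + εᵢ) − (εᵢ − min(ε₁,ε₂)). Then essinf over t of min(Φ₁(t), Φ₂(t)) equals v + min(ε₁, ε₂). -/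
open MeasureTheory Set

lemma essinf_aux_le {t0 tf C x : ℝ} (ht : t0 < tf) {g : ℝ → ℝ}
    (hC : ∀ t ∈ Icc t0 tf, g t ≤ C)
    (hx : volume {s ∈ Icc t0 tf | g s < x} = 0) : x ≤ C := by
  by_contra h
  push_neg at h
  have hset : {s ∈ Icc t0 tf | g s < x} = Icc t0 tf := by
    ext s
    simp only [mem_sep_iff]
    exact ⟨fun hh => hh.1, fun hs => ⟨hs, lt_of_le_of_lt (hC s hs) h⟩⟩
  rw [hset, Real.volume_Icc] at hx
  rw [ENNReal.ofReal_eq_zero] at hx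
  linarith

lemma essinf_key {t0 tf : ℝ} (ht : t0 < tf) {Ψ : ℝ → ℝ} {Cb : ℝ}
    (hC : ∀ t ∈ Icc t0 tf, |Ψ t| ≤ Cb)
    {v ε m x : ℝ} (hvi : v = essinfOn t0 tf Ψ) (hε : 0 ≤ ε) (hme : m ≤ ε)
    (hx : volume {s ∈ Icc t0 tf | max (Ψ s) (v + ε) - (ε - m) < x} = 0) :
    x ≤ v + m := by
  by_contra h
  push_neg at h
  have hsub : {s ∈ Icc t0 tf | Ψ s < x + ε - m}
      ⊆ {s ∈ Icc t0 tf | max (Ψ s) (v + ε) - (ε - m) < x} := by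
    intro s hs
    obtain ⟨hs1, hs2⟩ := hs
    refine ⟨hs1, ?_⟩
    have hmax : max (Ψ s) (v + ε) < x + ε - m := max_lt hs2 (by linarith)
    linarith
  have h0 : volume {s ∈ Icc t0 tf | Ψ s < x + ε - m} = 0 :=
    measure_mono_null hsub hx
  have hb : BddAbove {y : ℝ | volume {s ∈ Icc t0 tf | Ψ s < y} = 0} :=
    ⟨Cb, fun y hy => essinf_aux_le ht (fun t htc => (abs_le.1 (hC t htc)).2) hy⟩
  have hle : x + ε - m ≤ essinfOn t0 tf Ψ := le_csSup hb h0
  rw [← hvi] at hle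
  linarith

/-- Two-path instance of `μᵉᵢⱼ = vᵢⱼ + min of tolerances`: with
`Φᵢ(t) = max(Ψᵢ(t), v + εᵢ) − (εᵢ − min(ε₁,ε₂))` and `v = min(essinf Ψ₁, essinf Ψ₂)`,
the essential infimum of `min(Φ₁, Φ₂)` is `v + min(ε₁, ε₂)`. -/
theorem essinf_min_modified_operator (t0 tf : ℝ) (ht : t0 < tf)
    (Ψ₁ Ψ₂ : ℝ → ℝ) (h₁ : Measurable Ψ₁) (h₂ : Measurable Ψ₂)
    (hb₁ : ∃ C : ℝ, ∀ t ∈ Icc t0 tf, |Ψ₁ t| ≤ C)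
    (hb₂ : ∃ C : ℝ, ∀ t ∈ Icc t0 tf, |Ψ₂ t| ≤ C)
    (ε₁ ε₂ : ℝ) (hε₁ : 0 ≤ ε₁) (hε₂ : 0 ≤ ε₂)
    (v : ℝ) (hv : v = min (essinfOn t0 tf Ψ₁) (essinfOn t0 tf Ψ₂))
    (Φ₁ Φ₂ : ℝ → ℝ)
    (hΦ₁ : Φ₁ = fun t => max (Ψ₁ t) (v + ε₁) - (ε₁ - min ε₁ ε₂))
    (hΦ₂ : Φ₂ = fun t => max (Ψ₂ t) (v + ε₂) - (ε₂ - min ε₁ ε₂)) :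
    essinfOn t0 tf (fun t => min (Φ₁ t) (Φ₂ t)) = v + min ε₁ ε₂ := by
  obtain ⟨C₁, hC₁⟩ := hb₁
  obtain ⟨C₂, hC₂⟩ := hb₂
  set m := min ε₁ ε₂ with hm
  have hm1 : m ≤ ε₁ := min_le_left _ _
  have hm2 : m ≤ ε₂ := min_le_right _ _
  -- pointwise lower bound
  have hlow : ∀ t, v + m ≤ min (Φ₁ t) (Φ₂ t) := by
    intro t
    rw [hΦ₁, hΦ₂]
    simp only [le_min_iff]
    constructor
    · have := le_max_right (Ψ₁ t) (v + ε₁); linarith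
    · have := le_max_right (Ψ₂ t) (v + ε₂); linarith
  -- upper bound on the min on the interval
  have hub : ∀ t ∈ Icc t0 tf,
      min (Φ₁ t) (Φ₂ t) ≤ max C₁ (v + ε₁) - (ε₁ - m) := by
    intro t htI
    refine le_trans (min_le_left _ _) ?_
    simp only [hΦ₁]
    have hΨ : Ψ₁ t ≤ C₁ := (abs_le.1 (hC₁ t htI)).2
    have : max (Ψ₁ t) (v + ε₁) ≤ max C₁ (v + ε₁) :=
      max_le_max hΨ le_rfl
    linarith
  have hmem : v + m ∈ {x : ℝ |
      volume {s ∈ Icc t0 tf | min (Φ₁ s) (Φ₂ s) < x} = 0} := by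
    have : {s ∈ Icc t0 tf | min (Φ₁ s) (Φ₂ s) < v + m} = ∅ := by
      ext s
      simp only [mem_sep_iff, mem_empty_iff_false, iff_false, not_and, not_lt]
      exact fun _ => hlow s
    show volume _ = 0
    rw [this]
    exact measure_empty
  have hbdd : BddAbove {x : ℝ |
      volume {s ∈ Icc t0 tf | min (Φ₁ s) (Φ₂ s) < x} = 0} :=
    ⟨max C₁ (v + ε₁) - (ε₁ - m), fun x hx => essinf_aux_le ht hub hx⟩
  apply le_antisymm
  · refine csSup_le ⟨v + m, hmem⟩ ?_
    intro x hx
    rcases min_cases (essinfOn t0 tf Ψ₁) (essinfOn t0 tf Ψ₂) with ⟨he, _⟩ | ⟨he, _⟩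
    · have hsub : {s ∈ Icc t0 tf | max (Ψ₁ s) (v + ε₁) - (ε₁ - m) < x}
          ⊆ {s ∈ Icc t0 tf | min (Φ₁ s) (Φ₂ s) < x} := by
        intro s hs
        refine ⟨hs.1, lt_of_le_of_lt (min_le_left _ _) ?_⟩
        rw [hΦ₁]; exact hs.2
      exact essinf_key ht hC₁ (hv.trans he) hε₁ hm1 (measure_mono_null hsub hx)
    · have hsub : {s ∈ Icc t0 tf | max (Ψ₂ s) (v + ε₂) - (ε₂ - m) < x}
          ⊆ {s ∈ Icc t0 tf | min (Φ₁ s) (Φ₂ s) < x} := by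
        intro s hs
        refine ⟨hs.1, lt_of_le_of_lt (min_le_right _ _) ?_⟩
        rw [hΦ₂]; exact hs.2
      exact essinf_key ht hC₂ (hv.trans he) hε₂ hm2 (measure_mono_null hsub hx)
  · exact le_csSup hbdd hmem
end

section
/- Let Ψ : [t0,tf] → ℝ be L-Lipschitz, v its infimum over [t0,tf], and ε > 0. Partition [t0,tf] into n equal subintervals of length δ with δ < ε/(2L). Suppose the averages of Ψ over all subintervals containing a point where a piecewise-constant nonnegative function h* is positive are equal to the minimum average over all subintervals. Then h*(t) > 0 implies Ψ(t) ≤ v + ε for every t. -/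
open Set intervalIntegral

/-- Core step of the existence theorem for VT-BR-DUE (single-path version):
let `Ψ` be `L`-Lipschitz with infimum `v` on `[t0,tf]`, let `ε > 0`, and partition
`[t0,tf]` uniformly into `n` cells `Iᵢ = [t0 + i·δ, t0 + (i+1)·δ]` with `δ < ε/(2L)`.
If `h*` is piecewise constant with value `x i ≥ 0` on `Iᵢ`, and the average of `Ψ`
over every cell where `h*` is positive equals the minimal average over all cells
(i.e. it is `≤` every other cell average), then `h*(t) > 0` implies `Ψ(t) ≤ v + ε`. -/
theorem brdue_existence_core_step
    (t0 tf : ℝ) (ht : t0 < tf) (L : ℝ) (hL : 0 < L)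
    (Ψ : ℝ → ℝ)
    (hLip : ∀ s ∈ Icc t0 tf, ∀ t ∈ Icc t0 tf, |Ψ s - Ψ t| ≤ L * |s - t|)
    (v : ℝ) (hv : v = sInf (Ψ '' Icc t0 tf))
    (ε : ℝ) (hε : 0 < ε)
    (n : ℕ) (hn : 1 ≤ n) (δ : ℝ) (hδ : δ = (tf - t0) / n)
    (hmesh : δ < ε / (2 * L))
    (x : Fin n → ℝ) (hx : ∀ i, 0 ≤ x i)
    (hmin : ∀ i : Fin n, 0 < x i → ∀ j : Fin n,
      (∫ t in (t0 + (i : ℕ) * δ)..(t0 + ((i : ℕ) + 1) * δ), Ψ t) ≤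
      (∫ t in (t0 + (j : ℕ) * δ)..(t0 + ((j : ℕ) + 1) * δ), Ψ t)) :
    ∀ i : Fin n, ∀ t ∈ Icc (t0 + (i : ℕ) * δ) (t0 + ((i : ℕ) + 1) * δ),
      0 < x i → Ψ t ≤ v + ε := by
  have hnpos : (0:ℝ) < n := by exact_mod_cast hn
  have hδpos : 0 < δ := by rw [hδ]; exact div_pos (by linarith) hnpos
  have hnδ : (n:ℝ) * δ = tf - t0 := by rw [hδ]; field_simp [hnpos.ne']
  -- cells are inside [t0,tf]
  have hcell : ∀ i : Fin n, Icc (t0 + (i:ℕ) * δ) (t0 + ((i:ℕ) + 1) * δ) ⊆ Icc t0 tf := by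
    intro i s hs
    have h1 : ((i:ℕ):ℝ) + 1 ≤ (n:ℝ) := by exact_mod_cast i.2
    constructor
    · nlinarith [hs.1, (by positivity : (0:ℝ) ≤ ((i:ℕ):ℝ))]
    · nlinarith [hs.2]
  -- continuity
  have hcont : ContinuousOn Ψ (Icc t0 tf) := by
    have hlip : LipschitzOnWith L.toNNReal Ψ (Icc t0 tf) := by
      rw [lipschitzOnWith_iff_dist_le_mul]
      intro s hs t' ht'
      rw [Real.dist_eq, Real.dist_eq, Real.coe_toNNReal L hL.le]
      exact hLip s hs t' ht'
    exact hlip.continuousOn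
  -- minimizer
  obtain ⟨tm, htm, htmin⟩ := isCompact_Icc.exists_isMinOn (nonempty_Icc.2 ht.le) hcont
  have hvtm : v = Ψ tm := by
    rw [hv]
    apply le_antisymm
    · exact csInf_le (isCompact_Icc.bddBelow_image hcont) ⟨tm, htm, rfl⟩
    · exact le_csInf ((nonempty_Icc.2 ht.le).image Ψ) (by rintro b ⟨s, hs, rfl⟩; exact htmin hs)
  -- integral bounds on a cell containing a given point
  have key : ∀ i : Fin n, ∀ t ∈ Icc (t0 + (i:ℕ) * δ) (t0 + ((i:ℕ) + 1) * δ),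
      δ * (Ψ t - L * δ) ≤ (∫ s in (t0 + (i:ℕ) * δ)..(t0 + ((i:ℕ) + 1) * δ), Ψ s) ∧
      (∫ s in (t0 + (i:ℕ) * δ)..(t0 + ((i:ℕ) + 1) * δ), Ψ s) ≤ δ * (Ψ t + L * δ) := by
    intro i t htmem
    set a := t0 + (i:ℕ) * δ with ha
    set b := t0 + ((i:ℕ) + 1) * δ with hb
    have hab : a ≤ b := by simp only [ha, hb]; nlinarith
    have hba : b - a = δ := by simp only [ha, hb]; ring
    have hΨint : IntervalIntegrable Ψ MeasureTheory.volume a b :=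
      (hcont.mono (by rw [uIcc_of_le hab]; exact hcell i)).intervalIntegrable
    have hpt : ∀ s ∈ Icc a b, Ψ t - L * δ ≤ Ψ s ∧ Ψ s ≤ Ψ t + L * δ := by
      intro s hs
      have h1 : |Ψ t - Ψ s| ≤ L * |t - s| := hLip t (hcell i htmem) s (hcell i hs)
      have h2 : |t - s| ≤ δ := by
        rw [abs_sub_le_iff]
        constructor <;> [linarith [htmem.2, hs.1]; linarith [htmem.1, hs.2]]
      have h3 : |Ψ t - Ψ s| ≤ L * δ := h1.trans (by nlinarith)
      rw [abs_sub_le_iff] at h3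
      constructor <;> linarith [h3.1, h3.2]
    constructor
    · calc δ * (Ψ t - L * δ) = ∫ s in a..b, (Ψ t - L * δ) := by
            rw [intervalIntegral.integral_const, hba, smul_eq_mul]
        _ ≤ ∫ s in a..b, Ψ s :=
            intervalIntegral.integral_mono_on hab (intervalIntegrable_const) hΨint
              (fun s hs => (hpt s hs).1)
    · calc (∫ s in a..b, Ψ s) ≤ ∫ s in a..b, (Ψ t + L * δ) :=
            intervalIntegral.integral_mono_on hab hΨint (intervalIntegrable_const)
              (fun s hs => (hpt s hs).2)
        _ = δ * (Ψ t + L * δ) := by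
            rw [intervalIntegral.integral_const, hba, smul_eq_mul]
  -- cell containing tm
  obtain ⟨htm1, htm2⟩ := htm
  set u := tm - t0 with hu
  have hu0 : 0 ≤ u := by linarith
  have hun : u ≤ (n:ℝ) * δ := by rw [hnδ]; linarith
  set k : ℕ := min ⌊u / δ⌋₊ (n - 1) with hk
  have hkn : k < n := by
    have : n - 1 < n := Nat.sub_lt (by omega) one_pos
    exact lt_of_le_of_lt (min_le_right _ _) this
  have hkmem : tm ∈ Icc (t0 + (k:ℝ) * δ) (t0 + ((k:ℝ) + 1) * δ) := by
    rcases le_or_gt (⌊u / δ⌋₊) (n-1) with hc | hc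
    · have hkeq : k = ⌊u / δ⌋₊ := min_eq_left hc
      have hfl : (⌊u / δ⌋₊ : ℝ) ≤ u / δ := Nat.floor_le (by positivity)
      have hfu : u / δ < ⌊u / δ⌋₊ + 1 := Nat.lt_floor_add_one _
      rw [hkeq]
      constructor
      · have h4 := (le_div_iff₀ hδpos).1 hfl
        simp only [hu] at h4; linarith
      · have h5 := (div_lt_iff₀ hδpos).1 hfu
        simp only [hu] at h5; linarith
    · have hkeq : k = n - 1 := min_eq_right hc.le
      have h1 : ((n:ℕ) - 1 : ℕ) ≤ ⌊u / δ⌋₊ := hc.le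
      have h2 : (((n:ℕ) - 1 : ℕ) : ℝ) ≤ u / δ :=
        le_trans (by exact_mod_cast h1) (Nat.floor_le (by positivity) |>.trans_eq rfl) |>.trans (le_refl _)
      rw [hkeq]
      have hc1 : (((n:ℕ) - 1 : ℕ) : ℝ) = (n:ℝ) - 1 := by
        have : 1 ≤ n := hn
        push_cast [Nat.cast_sub this]; ring
      constructor
      · have := (le_div_iff₀ hδpos).1 h2
        rw [hc1] at this ⊢
        linarith
      · rw [hc1]
        have : (n:ℝ) - 1 + 1 = (n:ℝ) := by ring
        rw [this]
        linarith
  -- fix the lower bound in first branch properly later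
  intro i t htmem hxi
  have hkey_i := (key i t htmem).1
  have hkey_j := (key ⟨k, hkn⟩ tm hkmem).2
  have hmin' := hmin i hxi ⟨k, hkn⟩
  have h2Lδ : 2 * L * δ < ε := by
    have := (lt_div_iff₀ (by positivity : (0:ℝ) < 2 * L)).1 hmesh
    nlinarith
  have : δ * (Ψ t - L * δ) ≤ δ * (Ψ tm + L * δ) := by
    calc δ * (Ψ t - L * δ) ≤ _ := hkey_i
      _ ≤ _ := hmin'
      _ ≤ δ * (Ψ tm + L * δ) := hkey_j
  have hfin : Ψ t ≤ Ψ tm + 2 * L * δ := by nlinarith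
  rw [hvtm]
  linarith
end
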